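/- Let p be a prime with p \equiv 1 \pmod{4} and let A be the (p-1) x (p-1) matrix over F_p with entries A_{ij} = (p-i)^{p-j}. Then (det A)^2 \equiv -1 \pmod{p}. -/

import Mathlib

open Finset

theorem prodNonzero (p : ℕ) [Fact p.Prime] :
    ∏ d ∈ (univ : Finset (ZMod p)).erase 0, d = -1 := by
  have h1 : ∏ u : (ZMod p)ˣ, (u : ZMod p) = -1 := by
    simp_rw [← Units.coeHom_apply]
    rw [← map_prod (Units.coeHom (ZMod p))]
    simp_rw [FiniteField.prod_univ_units_id_eq_neg_one, Units.coeHom_apply, Units.val_neg,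
      Units.val_one]
  have h2 : (univ : Finset (ZMod p)).erase 0 = univ.image (fun u : (ZMod p)ˣ => (u : ZMod p)) := by
    ext d
    simp only [mem_image, mem_univ, true_and, mem_erase, and_true]
    constructor
    · rintro hd; exact ⟨(isUnit_iff_ne_zero.mpr hd).unit, rfl⟩
    · rintro ⟨u, rfl⟩; exact u.ne_zero
  rw [h2, Finset.prod_image (by intro a _ b _ h; exact Units.ext h), h1]

theorem prodSub (p : ℕ) [Fact p.Prime] (c : ZMod p) :
    ∏ b ∈ (univ : Finset (ZMod p)).erase c, (b - c) = -1 := by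
  rw [← prodNonzero p]
  apply Finset.prod_nbij' (fun b => b - c) (fun d => d + c)
  · intro b hb
    simp only [mem_erase, mem_univ, and_true] at hb ⊢
    exact sub_ne_zero.mpr hb
  · intro d hd
    simp only [mem_erase, mem_univ, and_true] at hd ⊢
    intro h; exact hd (by linear_combination h)
  · intro b _; ring
  · intro d _; ring
  · intro b _; rfl

/-- For a prime `p ≡ 1 (mod 4)`, the `(p-1)×(p-1)` matrix `A` over `F_p` with entries
`A_{ij} = (p-i)^{p-j}` satisfies `(det A)² ≡ -1 (mod p)`. -/
theorem det_sq_eq_neg_one (p : ℕ) (hp : p.Prime) (h4 : p % 4 = 1) :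
    (Matrix.det (Matrix.of fun i j : Fin (p - 1) =>
        ((p - (i.val + 1) : ℕ) : ZMod p) ^ (p - (j.val + 1)))) ^ 2 = -1 := by
  haveI : Fact p.Prime := ⟨hp⟩
  have hp2 : 2 ≤ p := hp.two_le
  have hp5 : 5 ≤ p := by omega
  set a : Fin (p - 1) → ZMod p := fun i => ((p - (i.val + 1) : ℕ) : ZMod p) with ha_def
  set x : Fin (p - 1) → ZMod p := fun i => (i.val : ZMod p) with hx_def
  -- basic facts about x
  have hxval : ∀ i : Fin (p - 1), (x i).val = i.val := fun i =>
    ZMod.val_cast_of_lt (lt_trans i.isLt (by omega))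
  have hxinj : ∀ i j : Fin (p - 1), x i = x j → i = j := by
    intro i j h
    have := hxval i; rw [h, hxval j] at this
    exact Fin.ext this.symm
  have hneg1 : ((p - 1 : ℕ) : ZMod p) = -1 := by
    have : ((p - 1 : ℕ) : ZMod p) = (p : ZMod p) - 1 := by
      rw [Nat.cast_sub (by omega)]; simp
    rw [this, ZMod.natCast_self]; ring
  have hxne : ∀ i : Fin (p - 1), x i ≠ -1 := by
    intro i h
    rw [← hneg1] at h
    have h1 := hxval i
    rw [h] at h1
    rw [ZMod.val_cast_of_lt (by omega)] at h1
    have := i.isLt; omega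
  have hxadd : ∀ i : Fin (p - 1), x i + 1 ≠ 0 := by
    intro i h
    exact hxne i (by linear_combination h)
  -- a in terms of x
  have ha : ∀ i : Fin (p - 1), a i = -(x i + 1) := by
    intro i
    have h1 : i.val + 1 ≤ p := by have := i.isLt; omega
    simp only [ha_def, hx_def]
    rw [Nat.cast_sub h1, ZMod.natCast_self]
    push_cast
    ring
  -- product of (x i + 1) is -1 (Wilson)
  have hprod_x : ∏ i : Fin (p - 1), (x i + 1) = -1 := by
    have h1 : ∀ i : Fin (p - 1), x i + 1 = ((i.val + 1 : ℕ) : ZMod p) := by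
      intro i; simp [hx_def]
    rw [prod_congr rfl fun i _ => h1 i]
    rw [Fin.prod_univ_eq_prod_range (fun i => ((i + 1 : ℕ) : ZMod p)) (p - 1)]
    rw [← Nat.cast_prod, Finset.prod_range_add_one_eq_factorial]
    exact ZMod.wilsons_lemma p
  -- product of a i is -1
  have hprod_a : ∏ i : Fin (p - 1), a i = -1 := by
    rw [prod_congr rfl fun i _ => ha i]
    have : ∀ i : Fin (p - 1), -(x i + 1) = (-1) * (x i + 1) := fun i => by ring
    rw [prod_congr rfl fun i _ => this i, prod_mul_distrib, hprod_x, prod_const, card_univ,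
      Fintype.card_fin, Even.neg_one_pow ⟨(p - 1) / 2, by omega⟩]
    ring
  -- the image of x is everything except -1
  have himg : (univ : Finset (Fin (p - 1))).image x = (univ : Finset (ZMod p)).erase (-1) := by
    apply Finset.eq_of_subset_of_card_le
    · intro b hb
      simp only [mem_image, mem_univ, true_and] at hb
      obtain ⟨i, rfl⟩ := hb
      exact mem_erase.mpr ⟨hxne i, mem_univ _⟩
    · rw [card_erase_of_mem (mem_univ _), card_univ, ZMod.card,
        card_image_of_injOn (fun i _ j _ h => hxinj i j h), card_univ, Fintype.card_fin]
  -- inner product over the complement of {i}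
  have hinner : ∀ i : Fin (p - 1),
      ∏ j ∈ univ.erase i, (x j - x i) = (x i + 1)⁻¹ := by
    intro i
    have hinj : Function.Injective x := fun i j h => hxinj i j h
    rw [← Finset.prod_image (f := fun b => b - x i)
      (fun u _ v _ h => hxinj u v h)]
    rw [Finset.image_erase hinj, himg, Finset.erase_right_comm]
    have hmem : (-1 : ZMod p) ∈ (univ : Finset (ZMod p)).erase (x i) := by
      exact mem_erase.mpr ⟨fun h => hxne i h.symm, mem_univ _⟩
    have hsplit := Finset.mul_prod_erase ((univ : Finset (ZMod p)).erase (x i))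
      (fun b => b - x i) hmem
    rw [prodSub p (x i)] at hsplit
    have hT : (x i + 1) * ∏ b ∈ (((univ : Finset (ZMod p)).erase (x i)).erase (-1)),
        (b - x i) = 1 := by linear_combination -hsplit
    exact (eq_inv_of_mul_eq_one_right hT).symm ▸ rfl
  -- parity of the number of pairs
  have hEven : Even (∑ i : Fin (p - 1), #(Ioi i)) := by
    have h1 : ∀ i : Fin (p - 1), #(Ioi i) = p - 1 - 1 - i.val := fun i => Fin.card_Ioi i
    rw [sum_congr rfl fun i _ => h1 i,
      Fin.sum_univ_eq_sum_range (fun j => p - 1 - 1 - j) (p - 1),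
      Finset.sum_range_reflect (fun j => j) (p - 1)]
    obtain ⟨k, hk⟩ : ∃ k, p = 4 * k + 1 := ⟨p / 4, by omega⟩
    have h3 := Finset.sum_range_id_mul_two (p - 1)
    have h4 : (p - 1) * (p - 1 - 1) = 4 * (k * (4 * k - 1)) := by
      have h5 : p - 1 = 4 * k := by omega
      rw [h5, Nat.mul_assoc]
    rw [h4] at h3
    exact ⟨k * (4 * k - 1), by omega⟩
  -- rewrite the matrix as a scaled, column-permuted Vandermonde matrix
  have hrev : ∀ j : Fin (p - 1), p - (j.val + 1) = (Fin.rev j).val + 1 := by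
    intro j
    have hj := j.isLt
    rw [Fin.val_rev]
    omega
  have hM : (Matrix.of fun i j : Fin (p - 1) =>
        ((p - (i.val + 1) : ℕ) : ZMod p) ^ (p - (j.val + 1))) =
      Matrix.of fun i j => a i * ((Matrix.vandermonde a).submatrix id Fin.revPerm) i j := by
    ext i j
    simp only [Matrix.of_apply, Matrix.submatrix_apply, Matrix.vandermonde_apply, id_eq,
      Fin.revPerm_apply]
    rw [hrev j, pow_succ]
    ring
  rw [hM, Matrix.det_mul_column, Matrix.det_permute', Matrix.det_vandermonde]
  rw [mul_pow, mul_pow, hprod_a]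
  -- the squared Vandermonde product
  have hQ : (∏ i : Fin (p - 1), ∏ j ∈ Ioi i, (a j - a i)) ^ 2 = -1 := by
    have hterm : ∀ i : Fin (p - 1), ∀ j ∈ Ioi i,
        (a j - a i) ^ 2 = (-1) * ((x j - x i) * (x i - x j)) := by
      intro i j _
      rw [ha i, ha j]; ring
    calc (∏ i : Fin (p - 1), ∏ j ∈ Ioi i, (a j - a i)) ^ 2
        = ∏ i : Fin (p - 1), ∏ j ∈ Ioi i, (a j - a i) ^ 2 := by
          simp_rw [← prod_pow]
      _ = ∏ i : Fin (p - 1), ∏ j ∈ Ioi i, (-1) * ((x j - x i) * (x i - x j)) :=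
          prod_congr rfl fun i _ => prod_congr rfl (hterm i)
      _ = (∏ i : Fin (p - 1), ∏ j ∈ Ioi i, (-1 : ZMod p)) *
            ∏ i : Fin (p - 1), ∏ j ∈ Ioi i, ((x j - x i) * (x i - x j)) := by
          rw [← prod_mul_distrib]
          exact prod_congr rfl fun i _ => prod_mul_distrib
      _ = 1 * ∏ i : Fin (p - 1), ∏ j ∈ Ioi i, ((x j - x i) * (x i - x j)) := by
          congr 1
          simp only [prod_const]
          rw [prod_pow_eq_pow_sum]
          exact Even.neg_one_pow hEven
      _ = ∏ i : Fin (p - 1), ∏ j ∈ univ.erase i, (x j - x i) := by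
          rw [one_mul, prod_prod_Ioi_mul_eq_prod_prod_off_diag (fun i j => x i - x j)]
          simp only [compl_singleton]
      _ = ∏ i : Fin (p - 1), (x i + 1)⁻¹ := prod_congr rfl fun i _ => hinner i
      _ = (∏ i : Fin (p - 1), (x i + 1))⁻¹ := by rw [prod_inv_distrib]
      _ = -1 := by rw [hprod_x]; norm_num
  rw [hQ]
  rcases Int.units_eq_one_or (Equiv.Perm.sign (Fin.revPerm : Equiv.Perm (Fin (p - 1)))) with
    h | h <;> rw [h] <;> norm_num
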